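/- For 0 < a < b and real p ≥ 2: e^{A^p(a,b) - L_p^p(a,b)} ≤ (e^{a^{p-1} + b^{p-1}})^{p(b-a)/8}, i.e. ((a+b)/2)^p - (b^{p+1}-a^{p+1})/((p+1)(b-a)) ≤ (p(b-a)/8)(a^{p-1} + b^{p-1}). -/

import Mathlib

open Real MeasureTheory Set

/-- Application to special means: midpoint estimate for `f t = exp (t ^ p)`. -/
theorem special_means_midpoint (a b p : ℝ) (ha : 0 < a) (hab : a < b) (hp : 2 ≤ p) :
    ((a + b) / 2) ^ p - (b ^ (p + 1) - a ^ (p + 1)) / ((p + 1) * (b - a)) ≤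
      (p * (b - a) / 8) * (a ^ (p - 1) + b ^ (p - 1)) := by
  have hb : 0 < b := ha.trans hab
  have hba : 0 < b - a := by linarith
  have hp0 : 0 < p := by linarith
  -- RHS is nonnegative
  have hrhs : 0 ≤ (p * (b - a) / 8) * (a ^ (p - 1) + b ^ (p - 1)) := by
    apply mul_nonneg
    · positivity
    · have := Real.rpow_nonneg ha.le (p - 1)
      have := Real.rpow_nonneg hb.le (p - 1)
      linarith
  -- LHS ≤ 0 via Jensen (Hermite–Hadamard)
  have hconv : ConvexOn ℝ (Icc a b) fun x : ℝ => x ^ p :=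
    (convexOn_rpow (by linarith)).subset (fun x hx => le_trans ha.le hx.1) (convex_Icc a b)
  have hcont : ContinuousOn (fun x : ℝ => x ^ p) (Icc a b) :=
    continuousOn_id.rpow_const fun x hx => Or.inl (ne_of_gt (lt_of_lt_of_le ha hx.1))
  have hμ : (volume (Icc a b)) = ENNReal.ofReal (b - a) := by
    rw [Real.volume_Icc]
  have hμ0 : volume (Icc a b) ≠ 0 := by
    rw [hμ]; simp [hba, hab]
  have hμt : volume (Icc a b) ≠ ⊤ := by rw [hμ]; exact ENNReal.ofReal_ne_top
  have hfs : ∀ᵐ x ∂(volume.restrict (Icc a b)), id x ∈ Icc a b :=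
    ae_restrict_mem measurableSet_Icc
  have hfi : IntegrableOn (id : ℝ → ℝ) (Icc a b) volume :=
    continuousOn_id.integrableOn_compact isCompact_Icc
  have hgi : IntegrableOn ((fun x : ℝ => x ^ p) ∘ id) (Icc a b) volume :=
    hcont.integrableOn_compact isCompact_Icc
  have key := hconv.map_set_average_le hcont isClosed_Icc hμ0 hμt hfs hfi hgi
  have hμreal : (volume (Icc a b)).toReal = b - a := by
    rw [hμ, ENNReal.toReal_ofReal hba.le]
  have h1 : (⨍ x in Icc a b, id x) = (a + b) / 2 := by
    rw [setAverage_eq, measureReal_def, hμreal]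
    have : ∫ x in Icc a b, id x = ∫ x in a..b, x := by
      rw [intervalIntegral.integral_of_le hab.le, MeasureTheory.integral_Icc_eq_integral_Ioc]
      rfl
    rw [this, integral_id, smul_eq_mul]
    field_simp
    ring
  have h2 : (⨍ x in Icc a b, (fun x : ℝ => x ^ p) (id x)) =
      (b ^ (p + 1) - a ^ (p + 1)) / ((p + 1) * (b - a)) := by
    rw [setAverage_eq, measureReal_def, hμreal]
    have : ∫ x in Icc a b, id x ^ p = ∫ x in a..b, x ^ p := by
      rw [intervalIntegral.integral_of_le hab.le, MeasureTheory.integral_Icc_eq_integral_Ioc]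
      rfl
    rw [this, integral_rpow (Or.inl (by linarith)), smul_eq_mul,
      inv_mul_eq_div, div_div]
  rw [h1, h2] at key
  linarith
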